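/- Let A ⪰ 0 be an n×n positive semidefinite matrix with range W of dimension d. Then the maximum of det_W(X)·det_W(Y) over pairs of positive semidefinite matrices X, Y with X + Y = A equals det_W(A/2)², where det_W(M) = det(O_Wᵀ M O_W) for O_W an orthonormal basis matrix of W. -/

import Mathlib

open Matrix

lemma psd_smul {m : ℕ} {c : ℝ} (hc : 0 ≤ c) {A : Matrix (Fin m) (Fin m) ℝ}
    (hA : A.PosSemidef) : (c • A).PosSemidef := by
  refine Matrix.PosSemidef.of_dotProduct_mulVec_nonneg ?_ (fun x => ?_)
  · unfold Matrix.IsHermitian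
    rw [conjTranspose_smul, hA.1.eq]
    simp
  · rw [smul_mulVec, dotProduct_smul]
    exact mul_nonneg hc (hA.dotProduct_mulVec_nonneg x)

lemma det_mul_det_one_sub_le {m : ℕ} {B : Matrix (Fin m) (Fin m) ℝ}
    (hB : B.PosSemidef) (hB' : (1 - B).PosSemidef) :
    B.det * (1 - B).det ≤ (1/4 : ℝ) ^ m := by
  have hH := hB.1
  have hBdet : B.det = ∏ i, hH.eigenvalues i := by
    simpa using hH.det_eq_prod_eigenvalues
  have hvv : ∀ i, (0:ℝ) < star (⇑(hH.eigenvectorBasis i)) ⬝ᵥ ⇑(hH.eigenvectorBasis i) := by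
    intro i
    have : star (⇑(hH.eigenvectorBasis i)) ⬝ᵥ ⇑(hH.eigenvectorBasis i)
        = ∑ j, (hH.eigenvectorBasis i j)^2 := by
      simp [dotProduct, sq]
    rw [this]
    apply Finset.sum_pos'
    · intro j _; positivity
    · by_contra hall
      push_neg at hall
      refine hH.eigenvectorBasis.orthonormal.ne_zero i (PiLp.ext fun j => ?_)
      have h1 := hall j (Finset.mem_univ j)
      have h2 : (0:ℝ) ≤ (hH.eigenvectorBasis i j)^2 := sq_nonneg _
      have : (hH.eigenvectorBasis i j)^2 = 0 := le_antisymm h1 h2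
      simpa using pow_eq_zero_iff (n := 2) (by norm_num) |>.mp this
  have hle1 : ∀ i, hH.eigenvalues i ≤ 1 := by
    intro i
    have h0 := hB'.dotProduct_mulVec_nonneg (⇑(hH.eigenvectorBasis i))
    have hmv : (1 - B) *ᵥ ⇑(hH.eigenvectorBasis i)
        = (1 - hH.eigenvalues i) • ⇑(hH.eigenvectorBasis i) := by
      rw [sub_mulVec, one_mulVec, hH.mulVec_eigenvectorBasis, sub_smul, one_smul]
    rw [hmv, dotProduct_smul, smul_eq_mul] at h0
    nlinarith [hvv i]
  have h1Bdet : (1 - B).det = ∏ i, (1 - hH.eigenvalues i) := by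
    have hU : (hH.eigenvectorUnitary : Matrix (Fin m) (Fin m) ℝ).det
        * (star (hH.eigenvectorUnitary : Matrix (Fin m) (Fin m) ℝ)).det = 1 := by
      rw [← det_mul, (Matrix.mem_unitaryGroup_iff).mp hH.eigenvectorUnitary.2, det_one]
    have h1B : 1 - B = (hH.eigenvectorUnitary : Matrix (Fin m) (Fin m) ℝ)
        * (1 - diagonal (RCLike.ofReal ∘ hH.eigenvalues))
        * (star (hH.eigenvectorUnitary : Matrix (Fin m) (Fin m) ℝ)) := by
      conv_lhs => rw [hH.spectral_theorem, Unitary.conjStarAlgAut_apply]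
      rw [Matrix.mul_sub, Matrix.sub_mul, Matrix.mul_one,
        (Matrix.mem_unitaryGroup_iff).mp hH.eigenvectorUnitary.2]
    rw [h1B, det_mul, det_mul, mul_comm, ← mul_assoc, mul_comm ((star _ : Matrix _ _ ℝ).det),
      hU, one_mul]
    have : (1 : Matrix (Fin m) (Fin m) ℝ) - diagonal (RCLike.ofReal ∘ hH.eigenvalues)
        = diagonal (fun i => 1 - hH.eigenvalues i) := by
      rw [← diagonal_one, diagonal_sub]
      rfl
    rw [this, det_diagonal]
  rw [hBdet, h1Bdet, ← Finset.prod_mul_distrib]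
  have : (1/4 : ℝ) ^ m = ∏ _i : Fin m, (1/4 : ℝ) := by simp
  rw [this]
  apply Finset.prod_le_prod
  · intro i _
    exact mul_nonneg (hB.eigenvalues_nonneg i) (by linarith [hle1 i])
  · intro i _
    nlinarith [sq_nonneg (hH.eigenvalues i - 1/2)]

open scoped MatrixOrder in
lemma key_ineq {m : ℕ} {B C : Matrix (Fin m) (Fin m) ℝ}
    (hB : B.PosSemidef) (hC : C.PosSemidef) :
    B.det * C.det ≤ (((1:ℝ)/2) • (B + C)).det ^ 2 := by
  have hM : (B + C).PosSemidef := hB.add hC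
  have hRHS : (((1:ℝ)/2) • (B + C)).det ^ 2 = (1/4 : ℝ) ^ m * (B + C).det ^ 2 := by
    rw [det_smul, Fintype.card_fin, mul_pow, ← pow_mul, mul_comm m 2, pow_mul]
    norm_num
  rw [hRHS]
  by_cases hdet : (B + C).det = 0
  · rw [hdet]
    obtain ⟨x, hx0, hx⟩ := (Matrix.exists_mulVec_eq_zero_iff).mpr hdet
    have hsum : star x ⬝ᵥ B *ᵥ x + star x ⬝ᵥ C *ᵥ x = 0 := by
      rw [← dotProduct_add, ← add_mulVec, hx, dotProduct_zero]
    have hBx : star x ⬝ᵥ B *ᵥ x = 0 := le_antisymm (by linarith [hB.dotProduct_mulVec_nonneg x, hC.dotProduct_mulVec_nonneg x]) (hB.dotProduct_mulVec_nonneg x)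
    have : B.det = 0 := by
      rw [← Matrix.exists_mulVec_eq_zero_iff]
      exact ⟨x, hx0, (hB.dotProduct_mulVec_zero_iff x).mp hBx⟩
    simp [this]
  · set S := CFC.sqrt (B + C) with hSdef
    have hS : S.PosSemidef := Matrix.nonneg_iff_posSemidef.mp (CFC.sqrt_nonneg _)
    have hSS : S * S = B + C := CFC.sqrt_mul_sqrt_self _ hM.nonneg
    have hdetS : S.det ≠ 0 := by
      intro h
      apply hdet
      rw [← hSS, det_mul, h, zero_mul]
    have hSinv : S⁻¹.PosSemidef := hS.inv
    have hSinvH : S⁻¹ᴴ = S⁻¹ := hSinv.1.eq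
    set B' := S⁻¹ * B * S⁻¹ with hB'def
    set C' := S⁻¹ * C * S⁻¹ with hC'def
    have hB'psd : B'.PosSemidef := by
      have := hB.mul_mul_conjTranspose_same S⁻¹
      rwa [hSinvH] at this
    have hsum1 : B' + C' = 1 := by
      have hinv : S⁻¹ * S = 1 := nonsing_inv_mul S (isUnit_iff_ne_zero.mpr hdetS)
      have hinv' : S * S⁻¹ = 1 := mul_nonsing_inv S (isUnit_iff_ne_zero.mpr hdetS)
      rw [hB'def, hC'def, ← Matrix.add_mul, ← Matrix.mul_add, ← hSS,
        ← Matrix.mul_assoc, hinv, Matrix.one_mul]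
      exact hinv'
    have hC'eq : C' = 1 - B' := by rw [← hsum1]; abel
    have hC'psd : (1 - B').PosSemidef := by
      rw [← hC'eq]
      have := hC.mul_mul_conjTranspose_same S⁻¹
      rwa [hSinvH] at this
    have hkey := det_mul_det_one_sub_le hB'psd hC'psd
    rw [← hC'eq] at hkey
    have hdetB' : B'.det = S⁻¹.det * B.det * S⁻¹.det := by
      rw [hB'def, det_mul, det_mul]
    have hdetC' : C'.det = S⁻¹.det * C.det * S⁻¹.det := by
      rw [hC'def, det_mul, det_mul]
    have hdetSinv : S⁻¹.det = (S.det)⁻¹ := (det_nonsing_inv S).trans (Ring.inverse_eq_inv _)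
    have hdetM : S.det * S.det = (B + C).det := by rw [← det_mul, hSS]
    have heq : B.det * C.det = (B'.det * C'.det) * (B + C).det ^ 2 := by
      rw [hdetB', hdetC', hdetSinv, ← hdetM]
      field_simp
    rw [heq]
    have := mul_le_mul_of_nonneg_right hkey (sq_nonneg ((B + C).det))
    linarith

theorem stmt9 {n d : ℕ} (A : Matrix (Fin n) (Fin n) ℝ) (hA : A.PosSemidef)
    (O : Matrix (Fin n) (Fin d) ℝ) (hO : Oᵀ * O = 1)
    (hrange : LinearMap.range O.mulVecLin = LinearMap.range A.mulVecLin) :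
    IsGreatest {v : ℝ | ∃ X Y : Matrix (Fin n) (Fin n) ℝ,
        X.PosSemidef ∧ Y.PosSemidef ∧ X + Y = A ∧
        v = (Oᵀ * X * O).det * (Oᵀ * Y * O).det}
      ((Oᵀ * ((1 / 2 : ℝ) • A) * O).det ^ 2) := by
  have hOT : Oᴴ = Oᵀ := by ext i j; simp [conjTranspose_apply]
  constructor
  · refine ⟨(1/2 : ℝ) • A, (1/2 : ℝ) • A, psd_smul (by norm_num) hA,
      psd_smul (by norm_num) hA, ?_, ?_⟩
    · rw [← add_smul]; norm_num
    · rw [pow_two]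
  · rintro v ⟨X, Y, hX, hY, hsum, rfl⟩
    have hBpsd : (Oᵀ * X * O).PosSemidef := by
      have := hX.conjTranspose_mul_mul_same O
      rwa [hOT] at this
    have hCpsd : (Oᵀ * Y * O).PosSemidef := by
      have := hY.conjTranspose_mul_mul_same O
      rwa [hOT] at this
    have hrw : Oᵀ * ((1 / 2 : ℝ) • A) * O = ((1:ℝ)/2) • (Oᵀ * X * O + Oᵀ * Y * O) := by
      rw [← hsum]
      rw [Matrix.mul_smul, Matrix.smul_mul, Matrix.mul_add, Matrix.add_mul]
    rw [hrw]
    exact key_ineq hBpsd hCpsd
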